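/- Let a, b, c be real numbers with a < c < b. Then the limit, as Z → 0 in ℂ with Re Z > 0, of ∫_a^b dw/(iZ + c − w) equals log((c − a)/(b − c)) − iπ. -/

import Mathlib

open MeasureTheory Filter Complex

lemma pv_ne {c : ℝ} {Z : ℂ} (hZ : 0 < Z.re) (w : ℝ) :
    Complex.I * Z + (c : ℂ) - (w : ℂ) ≠ 0 := by
  intro h
  have := congrArg Complex.im h
  simp [Complex.add_im, Complex.mul_im] at this
  exact hZ.ne' this

lemma pv_integral_eq (a b c : ℝ) {Z : ℂ} (hZ : 0 < Z.re) :
    (∫ w in a..b, 1 / (Complex.I * Z + (c : ℂ) - (w : ℂ))) =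
      Complex.log (Complex.I * Z + c - a) - Complex.log (Complex.I * Z + c - b) := by
  have him : ∀ w : ℝ, (Complex.I * Z + (c : ℂ) - (w : ℂ)).im = Z.re := by
    intro w; simp [Complex.add_im, Complex.mul_im]
  have hslit : ∀ w : ℝ, (Complex.I * Z + (c : ℂ) - (w : ℂ)) ∈ Complex.slitPlane := by
    intro w
    rw [Complex.mem_slitPlane_iff]
    right; rw [him w]; exact hZ.ne'
  have hderiv : ∀ w ∈ Set.uIcc a b,
      HasDerivAt (fun w : ℝ => -Complex.log (Complex.I * Z + c - (w : ℂ)))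
        (1 / (Complex.I * Z + (c : ℂ) - (w : ℂ))) w := by
    intro w _
    have h1 : HasDerivAt (fun w : ℝ => Complex.I * Z + (c : ℂ) - (w : ℂ)) (-1) w := by
      simpa using ((Complex.ofRealCLM.hasDerivAt (x := w)).const_sub
        (Complex.I * Z + (c : ℂ)))
    have h2 := (Complex.hasDerivAt_log (hslit w)).comp w h1
    have h3 := h2.neg
    refine h3.congr_deriv ?_
    simp
  have hcont : IntervalIntegrable
      (fun w : ℝ => 1 / (Complex.I * Z + (c : ℂ) - (w : ℂ))) volume a b := by
    apply ContinuousOn.intervalIntegrable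
    apply ContinuousOn.div continuousOn_const
    · exact (Continuous.continuousOn (by continuity))
    · intro w _; exact pv_ne hZ w
  rw [intervalIntegral.integral_eq_sub_of_hasDerivAt hderiv hcont]
  ring

theorem limit_principal_value_integral (a b c : ℝ) (hac : a < c) (hcb : c < b) :
    Tendsto (fun Z : ℂ => ∫ w in a..b, 1 / (Complex.I * Z + (c : ℂ) - (w : ℂ)))
      (nhdsWithin 0 {Z : ℂ | 0 < Z.re})
      (nhds ((Real.log ((c - a) / (b - c)) : ℂ) - Complex.I * (Real.pi : ℂ))) := by
  have heq : ∀ Z ∈ {Z : ℂ | 0 < Z.re},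
      (∫ w in a..b, 1 / (Complex.I * Z + (c : ℂ) - (w : ℂ))) =
        Complex.log (Complex.I * Z + c - a) - Complex.log (Complex.I * Z + c - b) :=
    fun Z hZ => pv_integral_eq a b c hZ
  apply Tendsto.congr' (eventuallyEq_nhdsWithin_of_eqOn fun Z hZ => (heq Z hZ).symm)
  -- first term
  have h1 : Tendsto (fun Z : ℂ => Complex.log (Complex.I * Z + c - a))
      (nhdsWithin 0 {Z : ℂ | 0 < Z.re}) (nhds ((Real.log (c - a) : ℂ))) := by
    have hc : ContinuousAt Complex.log ((c : ℂ) - a) := by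
      apply continuousAt_clog
      rw [Complex.mem_slitPlane_iff]
      left
      simp [sub_pos, hac]
    have hmap : Tendsto (fun Z : ℂ => Complex.I * Z + c - a)
        (nhdsWithin 0 {Z : ℂ | 0 < Z.re}) (nhds ((c : ℂ) - a)) := by
      have hco : Continuous (fun Z : ℂ => Complex.I * Z + c - a) := by fun_prop
      have : Tendsto (fun Z : ℂ => Complex.I * Z + c - a) (nhds 0) (nhds ((c : ℂ) - a)) := by
        simpa using hco.tendsto 0
      exact this.mono_left nhdsWithin_le_nhds
    have := hc.tendsto.comp hmap
    convert this using 2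
    · rfl
    rw [Complex.ofReal_log (le_of_lt (sub_pos.mpr hac))]
    push_cast
    ring_nf
  -- second term
  have h2 : Tendsto (fun Z : ℂ => Complex.log (Complex.I * Z + c - b))
      (nhdsWithin 0 {Z : ℂ | 0 < Z.re})
      (nhds ((Real.log (b - c) : ℂ) + Real.pi * Complex.I)) := by
    have hre : ((c : ℂ) - b).re < 0 := by simp [sub_neg, hcb]
    have him0 : ((c : ℂ) - b).im = 0 := by simp
    have hlog := Complex.tendsto_log_nhdsWithin_im_nonneg_of_re_neg_of_im_zero hre him0
    have hmap : Tendsto (fun Z : ℂ => Complex.I * Z + c - b)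
        (nhdsWithin 0 {Z : ℂ | 0 < Z.re})
        (nhdsWithin ((c : ℂ) - b) {z : ℂ | 0 ≤ z.im}) := by
      rw [tendsto_nhdsWithin_iff]
      constructor
      · have hco : Continuous (fun Z : ℂ => Complex.I * Z + c - b) := by fun_prop
        have : Tendsto (fun Z : ℂ => Complex.I * Z + c - b) (nhds 0) (nhds ((c : ℂ) - b)) := by
          simpa using hco.tendsto 0
        exact this.mono_left nhdsWithin_le_nhds
      · filter_upwards [self_mem_nhdsWithin] with Z hZ
        have : (Complex.I * Z + (c : ℂ) - (b : ℂ)).im = Z.re := by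
          simp [Complex.add_im, Complex.mul_im]
        simp only [Set.mem_setOf_eq, this]
        exact le_of_lt hZ
    have := hlog.comp hmap
    convert this using 2
    · rfl
    have habs : ‖((c : ℂ) - b)‖ = b - c := by
      rw [show ((c : ℂ) - b) = ((c - b : ℝ) : ℂ) by push_cast; ring]
      rw [Complex.norm_real, Real.norm_eq_abs, abs_of_neg (by linarith)]
      ring
    rw [habs]
  have := h1.sub h2
  convert this using 2
  rw [Real.log_div (by linarith) (by linarith)]
  push_cast
  ring
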